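/- Let m ≡ 3 mod 4 and n ≥ 1. Then there exists a free continuous action of the group (ℤ/2ℤ)^{2n} on the product (ℝP^m)^n. (It is induced coordinatewise by the free action of the quaternion group Q₈ on S^m given by quaternionic coordinates, which descends to a free action of Q₈/{±1} ≅ (ℤ/2ℤ)² on ℝP^m.) -/

import Mathlib

noncomputable section

/-- The unit sphere `S^m` in `ℝ^{m+1}`. -/
abbrev Sph (m : ℕ) : Type := Metric.sphere (0 : EuclideanSpace ℝ (Fin (m + 1))) 1

/-- The antipodal relation on the sphere `S^m`. -/
def antipodal (m : ℕ) (x y : Sph m) : Prop :=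
  (y : EuclideanSpace ℝ (Fin (m + 1))) = (x : EuclideanSpace ℝ (Fin (m + 1))) ∨
    (y : EuclideanSpace ℝ (Fin (m + 1))) = -(x : EuclideanSpace ℝ (Fin (m + 1)))

/-- Real projective `m`-space: the quotient of `S^m` by the antipodal map,
with the quotient topology. -/
abbrev RP (m : ℕ) : Type := Quot (antipodal m)

namespace QAct

variable {m q : ℕ}

abbrev V (m : ℕ) := EuclideanSpace ℝ (Fin (m + 1))

def sp (e : Fin (m+1) ≃ Fin q × Fin 4) (s : Fin 4 → ℝ) (τ : Fin 4 ≃ Fin 4)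
    (x : V m) : V m :=
  WithLp.toLp 2 (fun i => s (e i).2 * x (e.symm ((e i).1, τ (e i).2)))

def spL (e : Fin (m+1) ≃ Fin q × Fin 4) (s : Fin 4 → ℝ) (τ : Fin 4 ≃ Fin 4) :
    V m →ₗ[ℝ] V m where
  toFun := sp e s τ
  map_add' x y := by ext i; simp [sp, PiLp.add_apply, mul_add]
  map_smul' c x := by ext i; simp [sp, PiLp.smul_apply, smul_eq_mul]; ring

lemma sp_cont (e : Fin (m+1) ≃ Fin q × Fin 4) (s : Fin 4 → ℝ) (τ : Fin 4 ≃ Fin 4) :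
    Continuous (sp e s τ) :=
  (spL e s τ).continuous_of_finiteDimensional

lemma sp_neg (e : Fin (m+1) ≃ Fin q × Fin 4) (s : Fin 4 → ℝ) (τ : Fin 4 ≃ Fin 4)
    (x : V m) : sp e s τ (-x) = -(sp e s τ x) := by
  ext i; simp [sp, PiLp.neg_apply]

lemma sp_norm (e : Fin (m+1) ≃ Fin q × Fin 4) (s : Fin 4 → ℝ) (τ : Fin 4 ≃ Fin 4)
    (hs : ∀ t, s t = 1 ∨ s t = -1) (x : V m) : ‖sp e s τ x‖ = ‖x‖ := by
  rw [EuclideanSpace.norm_eq, EuclideanSpace.norm_eq]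
  congr 1
  set g : Fin (m+1) ≃ Fin (m+1) :=
    (e.trans (Equiv.prodCongr (Equiv.refl (Fin q)) τ)).trans e.symm with hg
  have key : ∀ i, ‖sp e s τ x i‖ ^ 2 = ‖x (g i)‖ ^ 2 := by
    intro i
    have : sp e s τ x i = s (e i).2 * x (g i) := rfl
    rw [this, norm_mul]
    rcases hs (e i).2 with h | h <;> rw [h] <;> simp
  calc ∑ i, ‖sp e s τ x i‖ ^ 2 = ∑ i, ‖x (g i)‖ ^ 2 :=
        Finset.sum_congr rfl fun i _ => key i
    _ = ∑ i, ‖x i‖ ^ 2 := Equiv.sum_comp g fun i => ‖x i‖ ^ 2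

lemma sp_sp (e : Fin (m+1) ≃ Fin q × Fin 4) (s s' s'' : Fin 4 → ℝ)
    (τ τ' τ'' : Fin 4 ≃ Fin 4) (ε : ℝ)
    (hs : ∀ t, s t * s' (τ t) = ε * s'' t) (hτ : ∀ t, τ' (τ t) = τ'' t) (x : V m) :
    sp e s τ (sp e s' τ' x) = WithLp.toLp 2 (fun i => ε * sp e s'' τ'' x i) := by
  ext i
  show s (e i).2 * sp e s' τ' x (e.symm ((e i).1, τ (e i).2)) = _
  simp only [sp]
  rw [e.apply_symm_apply ((e i).1, τ (e i).2)]
  rw [hτ, ← mul_assoc, hs, mul_assoc]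


def sI : Fin 4 → ℝ := ![-1,1,-1,1]
def sJ : Fin 4 → ℝ := ![-1,1,1,-1]
def sK : Fin 4 → ℝ := ![-1,-1,1,1]
def sOne : Fin 4 → ℝ := fun _ => 1
def tI : Fin 4 ≃ Fin 4 := ⟨![1,0,3,2], ![1,0,3,2], by decide, by decide⟩
def tJ : Fin 4 ≃ Fin 4 := ⟨![2,3,0,1], ![2,3,0,1], by decide, by decide⟩
def tK : Fin 4 ≃ Fin 4 := ⟨![3,2,1,0], ![3,2,1,0], by decide, by decide⟩

lemma sI_pm : ∀ t, sI t = 1 ∨ sI t = -1 := by intro t; fin_cases t <;> norm_num [sI]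
lemma sJ_pm : ∀ t, sJ t = 1 ∨ sJ t = -1 := by intro t; fin_cases t <;> norm_num [sJ]

variable (e : Fin (m+1) ≃ Fin q × Fin 4)

lemma sp_one (x : V m) : sp e sOne (Equiv.refl _) x = x := by
  ext i
  have : ((e i).1, (e i).2) = e i := rfl
  show sOne (e i).2 * x (e.symm ((e i).1, (e i).2)) = x i
  rw [this, e.symm_apply_apply, sOne, one_mul]

lemma neg_eq (x : V m) : WithLp.toLp 2 (fun i => (-1 : ℝ) * x i) = -x := by
  ext i
  show -1 * x i = -(x i)
  ring

lemma pos_eq (x : V m) : WithLp.toLp 2 (fun i => (1 : ℝ) * x i) = x := by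
  ext i; show 1 * x i = x i; ring

lemma spII (x : V m) : sp e sI tI (sp e sI tI x) = -x := by
  rw [sp_sp e sI sI sOne tI tI (Equiv.refl _) (-1)
    (by intro t; fin_cases t <;> simp [sI, sOne, tI])
    (by decide)]
  rw [sp_one]; exact neg_eq x

lemma spJJ (x : V m) : sp e sJ tJ (sp e sJ tJ x) = -x := by
  rw [sp_sp e sJ sJ sOne tJ tJ (Equiv.refl _) (-1)
    (by intro t; fin_cases t <;> simp [sJ, sOne, tJ])
    (by decide)]
  rw [sp_one]; exact neg_eq x

lemma spKK (x : V m) : sp e sK tK (sp e sK tK x) = -x := by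
  rw [sp_sp e sK sK sOne tK tK (Equiv.refl _) (-1)
    (by intro t; fin_cases t <;> simp [sK, sOne, tK])
    (by decide)]
  rw [sp_one]; exact neg_eq x

lemma spIJ (x : V m) : sp e sI tI (sp e sJ tJ x) = sp e sK tK x := by
  rw [sp_sp e sI sJ sK tI tJ tK 1
    (by intro t; fin_cases t <;> simp [sI, sJ, sK, tI, tJ, tK])
    (by decide)]
  exact pos_eq _

lemma spJI (x : V m) : sp e sJ tJ (sp e sI tI x) = -(sp e sK tK x) := by
  rw [sp_sp e sJ sI sK tJ tI tK (-1)
    (by intro t; fin_cases t <;> simp [sI, sJ, sK, tI, tJ, tK])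
    (by decide)]
  exact neg_eq _

lemma spIK (x : V m) : sp e sI tI (sp e sK tK x) = -(sp e sJ tJ x) := by
  rw [sp_sp e sI sK sJ tI tK tJ (-1)
    (by intro t; fin_cases t <;> simp [sI, sJ, sK, tI, tJ, tK])
    (by decide)]
  exact neg_eq _

lemma spKI (x : V m) : sp e sK tK (sp e sI tI x) = sp e sJ tJ x := by
  rw [sp_sp e sK sI sJ tK tI tJ 1
    (by intro t; fin_cases t <;> simp [sI, sJ, sK, tI, tJ, tK])
    (by decide)]
  exact pos_eq _

lemma spJK (x : V m) : sp e sJ tJ (sp e sK tK x) = sp e sI tI x := by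
  rw [sp_sp e sJ sK sI tJ tK tI 1
    (by intro t; fin_cases t <;> simp [sI, sJ, sK, tI, tJ, tK])
    (by decide)]
  exact pos_eq _

lemma spKJ (x : V m) : sp e sK tK (sp e sJ tJ x) = -(sp e sI tI x) := by
  rw [sp_sp e sK sJ sI tK tJ tI (-1)
    (by intro t; fin_cases t <;> simp [sI, sJ, sK, tI, tJ, tK])
    (by decide)]
  exact neg_eq _


lemma z2 : ∀ a : ZMod 2, a = 0 ∨ a = 1 := by decide

def G (a b : ZMod 2) : V m → V m := fun x =>
  (if a = 1 then sp e sI tI else id) ((if b = 1 then sp e sJ tJ else id) x)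

lemma G_norm (a b : ZMod 2) (x : V m) (hx : ‖x‖ = 1) : ‖G e a b x‖ = 1 := by
  rcases z2 a with rfl | rfl <;> rcases z2 b with rfl | rfl <;>
    simp [G] <;>
    simp [sp_norm e _ _ sI_pm, sp_norm e _ _ sJ_pm, hx]

lemma G_neg (a b : ZMod 2) (x : V m) : G e a b (-x) = -(G e a b x) := by
  rcases z2 a with rfl | rfl <;> rcases z2 b with rfl | rfl <;>
    simp [G, sp_neg]

lemma G_cont (a b : ZMod 2) : Continuous (G e a b) := by
  have h1 : ∀ s t (c : ZMod 2), Continuous (if c = 1 then sp e s t else id) := by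
    intro s t c; split
    · exact sp_cont e s t
    · exact continuous_id
  exact (h1 sI tI a).comp (h1 sJ tJ b)

lemma G_comp (a b a' b' : ZMod 2) (x : V m) :
    G e a b (G e a' b' x) = G e (a+a') (b+b') x ∨
    G e a b (G e a' b' x) = -(G e (a+a') (b+b') x) := by
  rcases z2 a with rfl | rfl <;> rcases z2 b with rfl | rfl <;>
    rcases z2 a' with rfl | rfl <;> rcases z2 b' with rfl | rfl <;>
    simp [G, show (0:ZMod 2)+0 = 0 from rfl, show (0:ZMod 2)+1 = 1 from rfl,
      show (1:ZMod 2)+0 = 1 from rfl, show (1:ZMod 2)+1 = 0 from rfl,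
      spII, spJJ, spKK, spIJ, spJI, spIK, spKI, spJK, spKJ, sp_neg]

lemma free_aux (T : V m → V m) (hTT : ∀ y, T (T y) = -y)
    (hTn : ∀ y, T (-y) = -(T y)) (x : V m) (hx : ‖x‖ = 1)
    (h : x = T x ∨ x = -(T x)) : False := by
  have hxx : x = -x := by
    rcases h with h | h
    · have h2 := hTT x
      rw [← h] at h2
      rw [← h] at h2
      exact h2
    · have h4 : T x = x := by
        have h5 := congrArg T h
        rw [hTn, hTT, neg_neg] at h5
        exact h5
      rw [h4] at h
      exact h
  have h2 : (2:ℝ) • x = 0 := by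
    rw [two_smul]
    nth_rewrite 1 [hxx]
    rw [neg_add_cancel]
  have hx0 : x = 0 := by
    rcases smul_eq_zero.mp h2 with h | h
    · norm_num at h
    · exact h
  rw [hx0] at hx
  simp at hx


lemma G_free (a b : ZMod 2) (x : V m) (hx : ‖x‖ = 1)
    (h : x = G e a b x ∨ x = -(G e a b x)) : a = 0 ∧ b = 0 := by
  rcases z2 a with rfl | rfl <;> rcases z2 b with rfl | rfl
  · exact ⟨rfl, rfl⟩
  · exfalso
    refine free_aux (sp e sJ tJ) (spJJ e) (sp_neg e sJ tJ) x hx ?_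
    simpa [G] using h
  · exfalso
    refine free_aux (sp e sI tI) (spII e) (sp_neg e sI tI) x hx ?_
    simpa [G] using h
  · exfalso
    refine free_aux (fun y => sp e sI tI (sp e sJ tJ y)) ?_ ?_ x hx ?_
    · intro y
      show sp e sI tI (sp e sJ tJ (sp e sI tI (sp e sJ tJ y))) = -y
      rw [spIJ, spIJ, spKK]
    · intro y
      show sp e sI tI (sp e sJ tJ (-y)) = -(sp e sI tI (sp e sJ tJ y))
      rw [sp_neg, sp_neg]
    · simpa [G] using h

def Gs (a b : ZMod 2) (x : Sph m) : Sph m :=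
  ⟨G e a b x, by
    have hx : ‖(x : V m)‖ = 1 := by
      simpa using mem_sphere_zero_iff_norm.mp x.2
    exact mem_sphere_zero_iff_norm.mpr (G_norm e a b _ hx)⟩

def phi (a b : ZMod 2) : RP m → RP m :=
  Quot.map (Gs e a b) (by
    intro x y h
    rcases h with h | h
    · left
      show G e a b (y : V m) = G e a b (x : V m)
      rw [h]
    · right
      show G e a b (y : V m) = -(G e a b (x : V m))
      rw [h, G_neg])

lemma phi_mk (a b : ZMod 2) (x : Sph m) :
    phi e a b (Quot.mk _ x) = Quot.mk _ (Gs e a b x) := rfl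

lemma antipodal_equiv : Equivalence (antipodal m) := by
  constructor
  · intro x; exact Or.inl rfl
  · intro x y h
    rcases h with h | h
    · exact Or.inl h.symm
    · right; rw [h, neg_neg]
  · intro x y z hxy hyz
    rcases hxy with h1 | h1 <;> rcases hyz with h2 | h2
    · exact Or.inl (h2.trans h1)
    · right; rw [h2, h1]
    · right; rw [h2, h1]
    · left; rw [h2, h1, neg_neg]

lemma rp_exact {u v : Sph m} (h : Quot.mk (antipodal m) u = Quot.mk (antipodal m) v) :
    antipodal m u v := by
  rw [Quot.eq] at h
  exact (Equivalence.eqvGen_iff antipodal_equiv).mp h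

lemma phi_id (z : RP m) : phi e 0 0 z = z := by
  induction z using Quot.ind with
  | _ y =>
    rw [phi_mk]
    apply Quot.sound
    left
    show (y : V m) = G e 0 0 (y : V m)
    simp [G, show (0:ZMod 2) ≠ 1 from by decide]

lemma phi_comp (a b a' b' : ZMod 2) (z : RP m) :
    phi e a b (phi e a' b' z) = phi e (a+a') (b+b') z := by
  induction z using Quot.ind with
  | _ y =>
    rw [phi_mk, phi_mk, phi_mk]
    apply Quot.sound
    rcases G_comp e a b a' b' (y : V m) with h | h
    · left
      exact h.symm
    · right
      show G e (a+a') (b+b') (y : V m) = -(G e a b (G e a' b' (y : V m)))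
      rw [h, neg_neg]

lemma phi_cont (a b : ZMod 2) : Continuous (phi e a b) := by
  have hGs : Continuous (Gs e a b) :=
    Continuous.subtype_mk ((G_cont e a b).comp continuous_subtype_val) _
  exact continuous_quot_lift _ (continuous_quot_mk.comp hGs)

lemma phi_free (a b : ZMod 2) (z : RP m) (h : phi e a b z = z) : a = 0 ∧ b = 0 := by
  induction z using Quot.ind with
  | _ y =>
    rw [phi_mk] at h
    have h2 := rp_exact h
    have hx : ‖(y : V m)‖ = 1 := by
      simpa using mem_sphere_zero_iff_norm.mp y.2
    refine G_free e a b (y : V m) hx ?_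
    rcases h2 with h3 | h3
    · exact Or.inl h3
    · exact Or.inr h3

end QAct

theorem stmt10 (m n : ℕ) (hm : m % 4 = 3) (hn : 1 ≤ n) :
    ∃ ρ : (Fin (2 * n) → ZMod 2) → (Fin n → RP m) → (Fin n → RP m),
      (∀ x, ρ 0 x = x) ∧
      (∀ g h x, ρ (g + h) x = ρ g (ρ h x)) ∧
      (∀ g, Continuous (ρ g)) ∧
      (∀ g x, ρ g x = x → g = 0) := by
  have he : m + 1 = (m / 4 + 1) * 4 := by omega
  let e : Fin (m+1) ≃ Fin (m/4+1) × Fin 4 := (finCongr he).trans finProdFinEquiv.symm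
  refine ⟨fun g x k =>
      QAct.phi e (g ⟨2 * k.val, by have := k.isLt; omega⟩)
        (g ⟨2 * k.val + 1, by have := k.isLt; omega⟩) (x k), ?_, ?_, ?_, ?_⟩
  · intro x
    funext k
    simp only [Pi.zero_apply]
    exact QAct.phi_id e (x k)
  · intro g h x
    funext k
    simp only [Pi.add_apply]
    exact (QAct.phi_comp e _ _ _ _ (x k)).symm
  · intro g
    apply continuous_pi
    intro k
    exact (QAct.phi_cont e _ _).comp (continuous_apply k)
  · intro g x hgx
    have key : ∀ k : Fin n,
        g ⟨2 * k.val, by have := k.isLt; omega⟩ = 0 ∧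
        g ⟨2 * k.val + 1, by have := k.isLt; omega⟩ = 0 := by
      intro k
      exact QAct.phi_free e _ _ (x k) (congrFun hgx k)
    funext j
    have hj := j.isLt
    set k : Fin n := ⟨j.val / 2, by omega⟩ with hk
    have hcase : j.val = 2 * k.val ∨ j.val = 2 * k.val + 1 := by
      show j.val = 2 * (j.val / 2) ∨ j.val = 2 * (j.val / 2) + 1
      omega
    show g j = 0
    rcases hcase with h | h
    · have : j = (⟨2 * k.val, by have := k.isLt; omega⟩ : Fin (2 * n)) := Fin.ext h
      rw [this]
      exact (key k).1
    · have : j = (⟨2 * k.val + 1, by have := k.isLt; omega⟩ : Fin (2 * n)) := Fin.ext h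
      rw [this]
      exact (key k).2
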